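/- Let H₀, H₁ ∈ B(𝓗) be self-adjoint, let c ∈ ℝ, set H := H₀ + c·H₁, and assume that the spectra of H₀ and of H are both contained in [1,∞). With K₀ := ‖H₁·(√H₀)⁻¹‖, one has ‖√H₀ ψ‖ ≤ ‖√H ψ‖ + 3·|c|·K₀·‖ψ‖ for every ψ ∈ 𝓗. -/

import Mathlib

open MeasureTheory
set_option synthInstance.maxHeartbeats 1000000
set_option maxHeartbeats 1000000

variable {𝓗 : Type*} [NormedAddCommGroup 𝓗] [InnerProductSpace ℂ 𝓗] [CompleteSpace 𝓗]

/-- Let `H := H₀ + c·H₁` with `H₀, H₁` self-adjoint and spectra of `H₀` and `H`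
in `[1,∞)`.  With `K₀ := ‖H₁·(√H₀)⁻¹‖`, one has
`‖√H₀ ψ‖ ≤ ‖√H ψ‖ + 3·|c|·K₀·‖ψ‖` for every `ψ ∈ 𝓗`. -/
theorem stmt_7 (H₀ H₁ : 𝓗 →L[ℂ] 𝓗) (hH₀ : IsSelfAdjoint H₀) (hH₁ : IsSelfAdjoint H₁)
    (c : ℝ) (H : 𝓗 →L[ℂ] 𝓗) (hH : H = H₀ + c • H₁)
    (hspec₀ : spectrum ℝ H₀ ⊆ Set.Ici 1) (hspec : spectrum ℝ H ⊆ Set.Ici 1)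
    (K₀ : ℝ) (hK₀ : K₀ = ‖H₁ * Ring.inverse (CFC.sqrt H₀)‖) :
    ∀ ψ : 𝓗, ‖CFC.sqrt H₀ ψ‖ ≤ ‖CFC.sqrt H ψ‖ + 3 * |c| * K₀ * ‖ψ‖ := by
  intro ψ
  set A := CFC.sqrt H₀ with hAdef
  set B := CFC.sqrt H with hBdef
  have hHsa : IsSelfAdjoint H := by
    rw [hH]; exact hH₀.add ((IsSelfAdjoint.all c).smul hH₁)
  have h₀pos : (0 : 𝓗 →L[ℂ] 𝓗) ≤ H₀ :=
    (StarOrderedRing.nonneg_iff_spectrum_nonneg (R := ℝ) H₀ hH₀).mpr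
      fun x hx => le_trans zero_le_one (hspec₀ hx)
  have hHpos : (0 : 𝓗 →L[ℂ] 𝓗) ≤ H :=
    (StarOrderedRing.nonneg_iff_spectrum_nonneg (R := ℝ) H hHsa).mpr
      fun x hx => le_trans zero_le_one (hspec hx)
  have hA2 : A * A = H₀ := CFC.sqrt_mul_sqrt_self H₀ h₀pos
  have hB2 : B * B = H := CFC.sqrt_mul_sqrt_self H hHpos
  have hAsa : IsSelfAdjoint A := IsSelfAdjoint.of_nonneg (CFC.sqrt_nonneg _)
  have hBsa : IsSelfAdjoint B := IsSelfAdjoint.of_nonneg (CFC.sqrt_nonneg _)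
  -- invertibility of A
  have hH₀unit : IsUnit H₀ := by
    rw [← spectrum.zero_notMem_iff ℝ]
    intro h0
    exact absurd (hspec₀ h0) (by norm_num)
  obtain ⟨u, hu⟩ := hH₀unit
  have h1 : A * (A * ↑u⁻¹) = 1 := by rw [← mul_assoc, hA2, ← hu, u.mul_inv]
  have h2 : (↑u⁻¹ * A) * A = 1 := by rw [mul_assoc, hA2, ← hu, u.inv_mul]
  have h3 : (↑u⁻¹ * A : 𝓗 →L[ℂ] 𝓗) = A * ↑u⁻¹ := left_inv_eq_right_inv h2 h1
  have hAunit : IsUnit A := ⟨⟨A, A * ↑u⁻¹, h1, h3 ▸ h2⟩, rfl⟩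
  -- norms as quadratic forms
  have quad : ∀ (T : 𝓗 →L[ℂ] 𝓗), IsSelfAdjoint T → (T * T) ψ = T (T ψ) ∧
      ‖T ψ‖ ^ 2 = RCLike.re (inner ℂ ((T * T) ψ) ψ : ℂ) := by
    intro T hT
    refine ⟨rfl, ?_⟩
    have : (inner ℂ ((T * T) ψ) ψ : ℂ) = inner ℂ (T ψ) (T ψ) := hT.isSymmetric (T ψ) ψ
    rw [this, inner_self_eq_norm_sq]
  have eA : ‖A ψ‖ ^ 2 = RCLike.re (inner ℂ (H₀ ψ) ψ : ℂ) := by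
    rw [(quad A hAsa).2, hA2]
  have eB : ‖B ψ‖ ^ 2 = RCLike.re (inner ℂ (H ψ) ψ : ℂ) := by
    rw [(quad B hBsa).2, hB2]
  have eH : RCLike.re (inner ℂ (H ψ) ψ : ℂ)
      = RCLike.re (inner ℂ (H₀ ψ) ψ : ℂ) + c * RCLike.re (inner ℂ (H₁ ψ) ψ : ℂ) := by
    rw [hH]
    simp only [ContinuousLinearMap.add_apply, inner_add_left, ContinuousLinearMap.smul_apply,
      map_add]
    rw [show c • H₁ ψ = ((c : ℂ)) • H₁ ψ from (Complex.coe_smul c (H₁ ψ)).symm,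
      inner_smul_left]
    simp [Complex.conj_ofReal, Complex.re_ofReal_mul]
  -- bound on the H₁ term
  have happ : H₁ ψ = (H₁ * Ring.inverse A) (A ψ) := by
    have : H₁ = (H₁ * Ring.inverse A) * A := by
      rw [mul_assoc, Ring.inverse_mul_cancel A hAunit, mul_one]
    conv_lhs => rw [this]
    rfl
  have hbound : |RCLike.re (inner ℂ (H₁ ψ) ψ : ℂ)| ≤ K₀ * ‖A ψ‖ * ‖ψ‖ := by
    calc |RCLike.re (inner ℂ (H₁ ψ) ψ : ℂ)| ≤ ‖(inner ℂ (H₁ ψ) ψ : ℂ)‖ :=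
          RCLike.abs_re_le_norm _
      _ ≤ ‖H₁ ψ‖ * ‖ψ‖ := norm_inner_le_norm _ _
      _ ≤ ‖H₁ * Ring.inverse A‖ * ‖A ψ‖ * ‖ψ‖ := by
          rw [happ]
          gcongr ?_ * ‖ψ‖
          exact ContinuousLinearMap.le_opNorm _ _
      _ = K₀ * ‖A ψ‖ * ‖ψ‖ := by rw [hK₀]
  -- combine
  have key : ‖A ψ‖ ^ 2 ≤ ‖B ψ‖ ^ 2 + |c| * K₀ * ‖A ψ‖ * ‖ψ‖ := by
    rw [eA, eB, eH]
    have : -(c * RCLike.re (inner ℂ (H₁ ψ) ψ : ℂ)) ≤ |c| * (K₀ * ‖A ψ‖ * ‖ψ‖) := by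
      calc -(c * RCLike.re (inner ℂ (H₁ ψ) ψ : ℂ)) ≤ |c * RCLike.re (inner ℂ (H₁ ψ) ψ : ℂ)| :=
            neg_le_abs _
        _ = |c| * |RCLike.re (inner ℂ (H₁ ψ) ψ : ℂ)| := abs_mul _ _
        _ ≤ |c| * (K₀ * ‖A ψ‖ * ‖ψ‖) := by
            exact mul_le_mul_of_nonneg_left hbound (abs_nonneg c)
    linarith
  have hK₀nn : 0 ≤ K₀ := hK₀ ▸ norm_nonneg _
  have ha := norm_nonneg (A ψ)
  have hb := norm_nonneg (B ψ)
  have hc := abs_nonneg c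
  have hpsi := norm_nonneg ψ
  nlinarith [sq_nonneg (‖A ψ‖ - ‖B ψ‖ - 3 * |c| * K₀ * ‖ψ‖), sq_nonneg (‖A ψ‖ - ‖B ψ‖),
    mul_nonneg (mul_nonneg hc hK₀nn) hpsi,
    mul_nonneg hb (mul_nonneg (mul_nonneg hc hK₀nn) hpsi)]
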